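/- Let d ≥ 0 be an integer and let λ : {1,...,d+1} × {false, true} → {1,...,d+1} be any labeling of the 2(d+1) vertices of the boundary of the (d+1)-dimensional cross-polytope, the vertices being indexed by pairs (i, b) with i ∈ {1,...,d+1} and b ∈ {false, true} (the two antipodal vertices of pair i). Call a function g : {1,...,d+1} → {false, true} fully-labeled if the map i ↦ λ(i, g(i)) is a bijection of {1,...,d+1}. If there exists a fully-labeled g_0, then there exists a fully-labeled g with g ≠ g_0. -/

import Mathlib

open Function

/-- Any self-map of a finite (nonempty) type has a periodic point. -/
lemma exists_periodicPt {n : ℕ} (f : Fin (n + 1) → Fin (n + 1)) :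
    (periodicPts f).Nonempty := by
  obtain ⟨a, b, hab, h⟩ := Finite.exists_ne_map_eq_of_infinite (fun k : ℕ => f^[k] 0)
  wlog hlt : a < b generalizing a b
  · exact this b a (Ne.symm hab) h.symm (by omega)
  refine ⟨f^[a] 0, b - a, by omega, ?_⟩
  show f^[b - a] (f^[a] 0) = f^[a] 0
  rw [← Function.iterate_add_apply]
  rw [show b - a + a = b by omega]
  exact h.symm

/-- **Another fully-labeled facet of the cross-polytope.** The vertices of the boundary of
the `(d+1)`-dimensional cross-polytope are indexed by pairs `(i, b)` with `i : Fin (d+1)`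
and `b : Bool` (the two antipodal vertices of pair `i`); a facet is a choice function
`g : Fin (d+1) → Bool`. Given a labeling `λ` of the vertices in `d+1` labels, if some facet
`g₀` is fully-labeled (i.e. `i ↦ λ (i, g₀ i)` is a bijection), then there is another
fully-labeled facet `g ≠ g₀`. -/
theorem exists_another_fully_labeled_facet (d : ℕ)
    (lab : Fin (d + 1) × Bool → Fin (d + 1))
    (g₀ : Fin (d + 1) → Bool)
    (hg₀ : Function.Bijective (fun i => lab (i, g₀ i))) :
    ∃ g : Fin (d + 1) → Bool,
      g ≠ g₀ ∧ Function.Bijective (fun i => lab (i, g i)) := by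
  classical
  set e := Equiv.ofBijective _ hg₀ with he
  -- f sends i to the index whose g₀-vertex has the same label as the antipodal vertex of i
  set f : Fin (d + 1) → Fin (d + 1) := fun i => e.symm (lab (i, !g₀ i)) with hf
  set S := periodicPts f with hS
  obtain ⟨x₀, hx₀⟩ := exists_periodicPt f
  have hbij : Set.BijOn f S S := bijOn_periodicPts f
  -- φ : flip by f inside S, identity outside
  set φ : Fin (d + 1) → Fin (d + 1) := fun i => if i ∈ S then f i else i with hφ
  have hφinj : Function.Injective φ := by
    intro a b hab
    simp only [hφ] at hab
    by_cases ha : a ∈ S <;> by_cases hb : b ∈ S <;> simp [ha, hb] at hab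
    · exact hbij.injOn ha hb hab
    · exact absurd (hab ▸ hbij.mapsTo ha) hb
    · exact absurd (hab.symm ▸ hbij.mapsTo hb) ha
    · exact hab
  have hφbij : Function.Bijective φ := Finite.injective_iff_bijective.mp hφinj
  refine ⟨fun i => if i ∈ S then !g₀ i else g₀ i, ?_, ?_⟩
  · intro hcon
    have := congrFun hcon x₀
    simp [hS, hx₀] at this
  · have key : (fun i => lab (i, if i ∈ S then !g₀ i else g₀ i)) = fun i => e (φ i) := by
      funext i
      by_cases hi : i ∈ S <;> simp [hφ, hi, hf, he]
    rw [key]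
    exact e.bijective.comp hφbij
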